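/- Call a pair x ≤ w in S_n 'influential' if infl^w(X) = {0,...,n}², where X = {p : rk_x(p) = rk_w(p)}. Every influential pair is tight, i.e., for every y ∈ S_n with rk_y = rk_w on X one has y ≤ w. -/

import Mathlib

open Equiv

/-- Rank function: `rk w i j = #{u = 1,...,i : w(u) ≤ j}` (1-based via `Fin`). -/
def rk {n : ℕ} (w : Equiv.Perm (Fin n)) (i j : ℕ) : ℕ :=
  (Finset.univ.filter (fun u : Fin n => u.val + 1 ≤ i ∧ (w u).val + 1 ≤ j)).card

/-- Coxeter length = number of inversions. -/
def len {n : ℕ} (w : Equiv.Perm (Fin n)) : ℕ :=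
  (Finset.univ.filter (fun p : Fin n × Fin n => p.1 < p.2 ∧ w p.2 < w p.1)).card

/-- A transposition. -/
def IsTransposition {n : ℕ} (t : Equiv.Perm (Fin n)) : Prop :=
  ∃ i j : Fin n, i ≠ j ∧ t = Equiv.swap i j

/-- Bruhat order: generated by `x → x·t` for transpositions `t` increasing the length. -/
def bruhatLE {n : ℕ} : Equiv.Perm (Fin n) → Equiv.Perm (Fin n) → Prop :=
  Relation.ReflTransGen (fun x y => ∃ t, IsTransposition t ∧ y = x * t ∧ len x < len y)

/-- Strict Bruhat order. -/
def bruhatLT {n : ℕ} (x y : Equiv.Perm (Fin n)) : Prop := bruhatLE x y ∧ x ≠ y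

/-- Difference function `d_w(p,p')`. -/
def dOf {n : ℕ} (w : Equiv.Perm (Fin n)) (p q : ℕ × ℕ) : ℤ :=
  (rk w p.1 p.2 : ℤ) + rk w q.1 q.2 - rk w p.1 q.2 - rk w q.1 p.2

/-- Strictly comparable points: `(i'−i)(j'−j) > 0`. -/
def SCmp (p q : ℕ × ℕ) : Prop := (p.1 < q.1 ∧ p.2 < q.2) ∨ (q.1 < p.1 ∧ q.2 < p.2)

/-- Corners of the rectangle spanned by `p`, `q`. -/
def corners (p q : ℕ × ℕ) : Set (ℕ × ℕ) := {(p.1, q.2), (q.1, p.2)}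

/-- One step of the influence construction. -/
def cOp {n : ℕ} (w : Equiv.Perm (Fin n)) (A B : Set (ℕ × ℕ)) : Set (ℕ × ℕ) :=
  B ∪ {p | ∃ p' ∈ A, SCmp p p' ∧ dOf w p p' = 0 ∧ corners p p' ⊆ B}

/-- The influence set of `A`. -/
def infl {n : ℕ} (w : Equiv.Perm (Fin n)) (A : Set (ℕ × ℕ)) : Set (ℕ × ℕ) :=
  ⋃ k : ℕ, (cOp w A)^[k] A

open Finset

lemma rk_eq_sum {n : ℕ} (z : Perm (Fin n)) (i j : ℕ) :
    rk z i j = ∑ u : Fin n, (if u.val < i ∧ (z u).val < j then 1 else 0) := by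
  rw [rk, Finset.card_filter]
  exact Finset.sum_congr rfl fun u _ => by split_ifs <;> omega

lemma sum_split {n : ℕ} (k : Fin n) (f : Fin n → ℕ) :
    ∑ u : Fin n, f u =
      (∑ u ∈ Finset.univ.filter (fun u : Fin n => u.val < k.val), f u) + f k +
      (∑ u ∈ Finset.univ.filter (fun u : Fin n => k.val < u.val), f u) := by
  rw [← Finset.sum_filter_add_sum_filter_not Finset.univ (fun u : Fin n => u.val < k.val) f]
  have h : Finset.univ.filter (fun u : Fin n => ¬ u.val < k.val) =
      insert k (Finset.univ.filter (fun u : Fin n => k.val < u.val)) := by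
    ext u
    simp [Fin.ext_iff]
    omega
  rw [h, Finset.sum_insert (by simp)]
  ring

lemma rk_succ {n : ℕ} (z : Perm (Fin n)) (u : Fin n) (j : ℕ) :
    rk z (u.val + 1) j = rk z u.val j + (if (z u).val < j then 1 else 0) := by
  rw [rk_eq_sum, rk_eq_sum, sum_split u, sum_split u]
  have hP : ∑ v ∈ Finset.univ.filter (fun v : Fin n => v.val < u.val),
        (if v.val < u.val + 1 ∧ (z v).val < j then 1 else 0)
      = ∑ v ∈ Finset.univ.filter (fun v : Fin n => v.val < u.val),
        (if v.val < u.val ∧ (z v).val < j then 1 else 0) := by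
    refine Finset.sum_congr rfl fun v hv => ?_
    simp only [Finset.mem_filter] at hv
    split_ifs <;> omega
  have hT : ∑ v ∈ Finset.univ.filter (fun v : Fin n => u.val < v.val),
        (if v.val < u.val + 1 ∧ (z v).val < j then 1 else 0)
      = ∑ v ∈ Finset.univ.filter (fun v : Fin n => u.val < v.val),
        (if v.val < u.val ∧ (z v).val < j then 1 else 0) := by
    refine Finset.sum_congr rfl fun v hv => ?_
    simp only [Finset.mem_filter] at hv
    split_ifs <;> omega
  rw [hP, hT]
  split_ifs <;> omega

lemma rk_min {n : ℕ} (z : Perm (Fin n)) (i j : ℕ) :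
    rk z i j = rk z (min i n) (min j n) := by
  rw [rk, rk]
  congr 1
  apply Finset.filter_congr
  intro u _
  have hu := u.isLt
  have hz := (z u).isLt
  constructor <;> intro ⟨h1, h2⟩ <;> omega

lemma rk_submodular {n : ℕ} (z : Perm (Fin n)) {i i' j j' : ℕ} (hi : i ≤ i') (hj : j ≤ j') :
    rk z i j' + rk z i' j ≤ rk z i j + rk z i' j' := by
  classical
  set A := Finset.univ.filter (fun u : Fin n => u.val + 1 ≤ i ∧ (z u).val + 1 ≤ j') with hA
  set B := Finset.univ.filter (fun u : Fin n => u.val + 1 ≤ i' ∧ (z u).val + 1 ≤ j) with hB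
  have key := Finset.card_union_add_card_inter A B
  have hsub : A ∪ B ⊆ Finset.univ.filter (fun u : Fin n => u.val + 1 ≤ i' ∧ (z u).val + 1 ≤ j') := by
    intro u hu
    simp only [hA, hB, Finset.mem_union, Finset.mem_filter, Finset.mem_univ, true_and] at hu ⊢
    omega
  have hint : A ∩ B = Finset.univ.filter (fun u : Fin n => u.val + 1 ≤ i ∧ (z u).val + 1 ≤ j) := by
    ext u
    simp only [hA, hB, Finset.mem_inter, Finset.mem_filter, Finset.mem_univ, true_and]
    omega
  have hle := Finset.card_le_card hsub
  rw [hint] at key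
  show A.card + B.card ≤ _
  rw [← key]
  rw [rk, rk]
  omega

lemma perm_eq_of_rk_eq {n : ℕ} (y w : Perm (Fin n))
    (h : ∀ i j, i ≤ n → j ≤ n → rk y i j = rk w i j) : y = w := by
  apply Equiv.ext
  intro u
  have hlt := u.isLt
  have e : ∀ j, j ≤ n → (if (y u).val < j then 1 else 0 : ℕ) = (if (w u).val < j then 1 else 0) := by
    intro j hj
    have h1 := rk_succ y u j
    have h2 := rk_succ w u j
    have h3 := h (u.val + 1) j (by omega) hj
    have h4 := h u.val j (by omega) hj
    omega
  have e1 := e ((y u).val + 1) (by have := (y u).isLt; omega)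
  have e2 := e ((w u).val + 1) (by have := (w u).isLt; omega)
  have : (y u).val = (w u).val := by split_ifs at e1 e2 <;> omega
  exact Fin.ext this

lemma strict_rect {n : ℕ} (y w : Perm (Fin n)) (h : ∀ i j, rk w i j ≤ rk y i j)
    (k l : Fin n) (hkl : k.val < l.val)
    (hpre : ∀ u : Fin n, u.val < k.val → y u = w u)
    (hyk : (y k).val < (w k).val) (hlw : (y l).val ≤ (w k).val)
    (hmin : ∀ u : Fin n, k.val < u.val → u.val < l.val →
      (y k).val < (y u).val → (w k).val < (y u).val)
    {i j : ℕ} (hik : k.val < i) (hil : i ≤ l.val) (hjk : (y k).val < j) (hjl : j ≤ (y l).val) :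
    rk w i j + 1 ≤ rk y i j := by
  have hdom := h i ((w k).val + 1)
  rw [rk_eq_sum, rk_eq_sum] at hdom
  rw [rk_eq_sum, rk_eq_sum]
  rw [sum_split k, sum_split k] at hdom
  rw [sum_split k, sum_split k]
  -- prefix blocks are equal
  have hP1 : ∑ v ∈ Finset.univ.filter (fun v : Fin n => v.val < k.val),
        (if v.val < i ∧ (w v).val < j then 1 else 0)
      = ∑ v ∈ Finset.univ.filter (fun v : Fin n => v.val < k.val),
        (if v.val < i ∧ (y v).val < j then 1 else 0) := by
    refine Finset.sum_congr rfl fun v hv => ?_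
    simp only [Finset.mem_filter] at hv
    rw [hpre v hv.2]
  have hP2 : ∑ v ∈ Finset.univ.filter (fun v : Fin n => v.val < k.val),
        (if v.val < i ∧ (w v).val < (w k).val + 1 then 1 else 0)
      = ∑ v ∈ Finset.univ.filter (fun v : Fin n => v.val < k.val),
        (if v.val < i ∧ (y v).val < (w k).val + 1 then 1 else 0) := by
    refine Finset.sum_congr rfl fun v hv => ?_
    simp only [Finset.mem_filter] at hv
    rw [hpre v hv.2]
  -- k-terms
  have hk1 : (if k.val < i ∧ (w k).val < j then (1:ℕ) else 0) = 0 := by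
    split_ifs <;> omega
  have hk2 : (if k.val < i ∧ (y k).val < j then (1:ℕ) else 0) = 1 := by
    split_ifs <;> omega
  have hk3 : (if k.val < i ∧ (w k).val < (w k).val + 1 then (1:ℕ) else 0) = 1 := by
    split_ifs <;> omega
  have hk4 : (if k.val < i ∧ (y k).val < (w k).val + 1 then (1:ℕ) else 0) = 1 := by
    split_ifs <;> omega
  -- tail comparisons
  have hT1 : ∑ v ∈ Finset.univ.filter (fun v : Fin n => k.val < v.val),
        (if v.val < i ∧ (w v).val < j then 1 else 0)
      ≤ ∑ v ∈ Finset.univ.filter (fun v : Fin n => k.val < v.val),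
        (if v.val < i ∧ (w v).val < (w k).val + 1 then 1 else 0) := by
    refine Finset.sum_le_sum fun v hv => ?_
    split_ifs <;> omega
  have hT2 : ∑ v ∈ Finset.univ.filter (fun v : Fin n => k.val < v.val),
        (if v.val < i ∧ (y v).val < (w k).val + 1 then 1 else 0)
      ≤ ∑ v ∈ Finset.univ.filter (fun v : Fin n => k.val < v.val),
        (if v.val < i ∧ (y v).val < j then 1 else 0) := by
    refine Finset.sum_le_sum fun v hv => ?_
    simp only [Finset.mem_filter] at hv
    split_ifs with h1 h2
    · omega
    · exfalso
      have hul : v.val < l.val := by omega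
      have hyy : (y k).val < (y v).val := by omega
      have := hmin v hv.2 hul hyy
      omega
    · omega
    · omega
  omega

lemma sum_split2 {n : ℕ} {k l : Fin n} (hne : k ≠ l) (f : Fin n → ℕ) :
    ∑ u : Fin n, f u = f k + f l + ∑ u ∈ (Finset.univ.erase k).erase l, f u := by
  have hl : l ∈ Finset.univ.erase k := by simp [hne.symm]
  rw [← Finset.add_sum_erase _ f (Finset.mem_univ k), ← Finset.add_sum_erase _ f hl]
  ring

lemma rk_mul_swap {n : ℕ} (y : Perm (Fin n)) (k l : Fin n) (hkl : k.val < l.val)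
    (hv : (y k).val < (y l).val) (i j : ℕ) :
    rk (y * Equiv.swap k l) i j
      + (if k.val < i ∧ i ≤ l.val ∧ (y k).val < j ∧ j ≤ (y l).val then 1 else 0) = rk y i j := by
  have hne : k ≠ l := by intro hh; rw [hh] at hkl; omega
  rw [rk_eq_sum, rk_eq_sum]
  have reindex : (∑ u : Fin n, if u.val < i ∧ ((y * Equiv.swap k l) u).val < j then (1:ℕ) else 0)
      = ∑ u : Fin n, (if (Equiv.swap k l u).val < i ∧ (y u).val < j then (1:ℕ) else 0) := by
    rw [← Equiv.sum_comp (Equiv.swap k l)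
      (fun u => if (Equiv.swap k l u).val < i ∧ (y u).val < j then (1:ℕ) else 0)]
    refine Finset.sum_congr rfl fun u _ => ?_
    simp [Equiv.swap_apply_self, Equiv.Perm.mul_apply]
    congr 1
  rw [reindex, sum_split2 hne, sum_split2 hne]
  have hE : ∑ u ∈ (Finset.univ.erase k).erase l,
        (if (Equiv.swap k l u).val < i ∧ (y u).val < j then (1:ℕ) else 0)
      = ∑ u ∈ (Finset.univ.erase k).erase l, (if u.val < i ∧ (y u).val < j then (1:ℕ) else 0) := by
    refine Finset.sum_congr rfl fun u hu => ?_
    simp only [Finset.mem_erase] at hu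
    rw [Equiv.swap_apply_of_ne_of_ne hu.2.1 hu.1]
  rw [hE, Equiv.swap_apply_left, Equiv.swap_apply_right]
  split_ifs <;> omega


lemma len_lt_mul_swap {n : ℕ} (y : Perm (Fin n)) (k l : Fin n) (hkl : k < l) (hv : y k < y l) :
    len y < len (y * Equiv.swap k l) := by
  classical
  set τ := Equiv.swap k l with hτ
  have hne : k ≠ l := ne_of_lt hkl
  have happ : ∀ c, (y * τ) c = y (τ c) := fun c => rfl
  have hτk : τ k = l := Equiv.swap_apply_left k l
  have hτl : τ l = k := Equiv.swap_apply_right k l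
  have hτo : ∀ c : Fin n, c ≠ k → c ≠ l → τ c = c := fun c h1 h2 =>
    Equiv.swap_apply_of_ne_of_ne h1 h2
  set S := Finset.univ.filter (fun p : Fin n × Fin n => p.1 < p.2 ∧ y p.2 < y p.1) with hS
  set S' := Finset.univ.filter
    (fun p : Fin n × Fin n => p.1 < p.2 ∧ (y * τ) p.2 < (y * τ) p.1) with hS'
  set G : Fin n × Fin n → Fin n × Fin n :=
    fun p => (if l < p.2 then τ p.1 else p.1, if p.1 < k then τ p.2 else p.2) with hG
  have hA : ∀ a : Fin n, (τ a < k ↔ a < k) := by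
    intro a
    rcases eq_or_ne a k with rfl | h1
    · rw [hτk]; exact iff_of_false (asymm hkl) (lt_irrefl _)
    rcases eq_or_ne a l with rfl | h2
    · rw [hτl]; exact iff_of_false (lt_irrefl _) (asymm hkl)
    · rw [hτo a h1 h2]
  have hB : ∀ b : Fin n, (l < τ b ↔ l < b) := by
    intro b
    rcases eq_or_ne b k with rfl | h1
    · rw [hτk]; exact iff_of_false (lt_irrefl _) (asymm hkl)
    rcases eq_or_ne b l with rfl | h2
    · rw [hτl]; exact iff_of_false (asymm hkl) (lt_irrefl _)
    · rw [hτo b h1 h2]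
  have hττ : ∀ c : Fin n, τ (τ c) = c := fun c => Equiv.swap_apply_self k l c
  have hGG : ∀ p, G (G p) = p := by
    rintro ⟨a, b⟩
    simp only [hG]
    by_cases ha : a < k <;> by_cases hb : l < b <;>
      simp [ha, hb, hA, hB, hττ]
  have hGinj : ∀ p q, G p = G q → p = q := by
    intro p q hpq
    have := congrArg G hpq
    rwa [hGG, hGG] at this
  have hmaps : ∀ p ∈ S, G p ∈ S' := by
    rintro ⟨a, b⟩ hp
    simp only [hS, Finset.mem_filter, Finset.mem_univ, true_and] at hp
    obtain ⟨hab, hyv⟩ := hp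
    simp only [hS', hG, Finset.mem_filter, Finset.mem_univ, true_and, happ]
    by_cases hb : l < b <;> by_cases ha : a < k <;> simp only [hb, ha, if_true, if_false,
      if_pos, if_neg, ite_true, ite_false]
    · -- l < b, a < k : G p = (τ a, τ b) = (a, b)
      have h1 : a ≠ k := ne_of_lt ha
      have h2 : a ≠ l := ne_of_lt (ha.trans hkl)
      have h3 : b ≠ k := ne_of_gt (hkl.trans hb)
      have h4 : b ≠ l := ne_of_gt hb
      rw [hτo a h1 h2, hτo b h3 h4, hτo a h1 h2, hτo b h3 h4]
      exact ⟨hab, hyv⟩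
    · -- l < b, ¬ a < k : G p = (τ a, b)
      have h3 : b ≠ k := ne_of_gt (hkl.trans hb)
      have h4 : b ≠ l := ne_of_gt hb
      rcases eq_or_ne a k with rfl | h1
      · rw [hτk, hτl, hτo b h3 h4]
        exact ⟨hb, hyv⟩
      rcases eq_or_ne a l with rfl | h2
      · rw [hτl, hτk, hτo b h3 h4]
        exact ⟨hkl.trans hb, hyv⟩
      · rw [hτo a h1 h2, hτo a h1 h2, hτo b h3 h4]
        exact ⟨hab, hyv⟩
    · -- ¬ l < b, a < k : G p = (a, τ b)
      have h1 : a ≠ k := ne_of_lt ha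
      have h2 : a ≠ l := ne_of_lt (ha.trans hkl)
      rcases eq_or_ne b k with rfl | h3
      · rw [hτk, hτo a h1 h2, hτl]
        exact ⟨ha.trans hkl, hyv⟩
      rcases eq_or_ne b l with rfl | h4
      · rw [hτl, hτo a h1 h2, hτk]
        exact ⟨ha, hyv⟩
      · rw [hτo b h3 h4, hτo a h1 h2, hτo b h3 h4]
        exact ⟨hab, hyv⟩
    · -- ¬ l < b, ¬ a < k : G p = (a, b), with k ≤ a < b ≤ l
      push_neg at hb ha
      rcases eq_or_ne a k with rfl | h1
      · rcases eq_or_ne b l with rfl | h4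
        · exact absurd hyv (asymm hv)
        · have h3 : b ≠ a := ne_of_gt hab
          rw [hτk, hτo b h3 h4]
          exact ⟨hab, lt_trans hyv hv⟩
      · have h2 : a ≠ l := ne_of_lt (lt_of_lt_of_le hab hb)
        rcases eq_or_ne b l with rfl | h4
        · rw [hτl, hτo a h1 h2]
          exact ⟨hab, lt_trans hv hyv⟩
        · have h3 : b ≠ k := by
            intro hh; rw [hh] at hab; exact absurd (lt_of_le_of_lt ha hab) (lt_irrefl k)
          rw [hτo b h3 h4, hτo a h1 h2]
          exact ⟨hab, hyv⟩
  have hklS' : (k, l) ∈ S' := by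
    simp only [hS', Finset.mem_filter, Finset.mem_univ, true_and, happ]
    rw [hτk, hτl]
    exact ⟨hkl, hv⟩
  have himg : S.image G ⊆ S'.erase (k, l) := by
    intro q hq
    simp only [Finset.mem_image] at hq
    obtain ⟨p, hp, rfl⟩ := hq
    refine Finset.mem_erase.mpr ⟨?_, hmaps p hp⟩
    intro hh
    have hGkl : G (k, l) = (k, l) := by
      simp only [hG]
      rw [if_neg (lt_irrefl l), if_neg (lt_irrefl k)]
    have : p = (k, l) := hGinj p (k, l) (by rw [hh, hGkl])
    rw [this] at hp
    simp only [hS, Finset.mem_filter, Finset.mem_univ, true_and] at hp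
    exact absurd hp.2 (asymm hv)
  have hcard1 : S.card = (S.image G).card :=
    (Finset.card_image_of_injOn (fun p _ q _ h => hGinj p q h)).symm
  have hcard2 : (S.image G).card ≤ (S'.erase (k, l)).card := Finset.card_le_card himg
  have hcard3 : (S'.erase (k, l)).card = S'.card - 1 := Finset.card_erase_of_mem hklS'
  have hpos : 1 ≤ S'.card := Finset.card_pos.mpr ⟨(k, l), hklS'⟩
  show S.card < S'.card
  omega


lemma dom_bruhat {n : ℕ} (w : Perm (Fin n)) :
    ∀ N (y : Perm (Fin n)),
      (∑ p ∈ Finset.range (n+1) ×ˢ Finset.range (n+1), (rk y p.1 p.2 - rk w p.1 p.2)) ≤ N →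
      (∀ i j, rk w i j ≤ rk y i j) → bruhatLE y w := by
  intro N
  induction N with
  | zero =>
    intro y hM h
    have hy : y = w := by
      apply perm_eq_of_rk_eq
      intro i j hi hj
      have hmem : ((i, j) : ℕ × ℕ) ∈ Finset.range (n+1) ×ˢ Finset.range (n+1) := by
        simp [Finset.mem_product]
        omega
      have hz := Finset.sum_eq_zero_iff.mp (Nat.le_zero.mp hM) (i, j) hmem
      have := h i j
      simp only at hz
      omega
    rw [hy]
    exact Relation.ReflTransGen.refl
  | succ N IH =>
    intro y hM h
    by_cases hyw : y = w
    · rw [hyw]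
      exact Relation.ReflTransGen.refl
    -- find the first position where y and w differ
    have hex : ∃ u, y u ≠ w u := by
      by_contra hc
      push_neg at hc
      exact hyw (Equiv.ext hc)
    obtain ⟨u0, hu0⟩ := hex
    set s := Finset.univ.filter (fun u : Fin n => y u ≠ w u) with hs
    have hsne : s.Nonempty := ⟨u0, by simp [hs, hu0]⟩
    set k := s.min' hsne with hk
    have hkmem : y k ≠ w k := by
      have := Finset.min'_mem s hsne
      simpa [hs] using this
    have hpre : ∀ u : Fin n, u.val < k.val → y u = w u := by
      intro u hu
      by_contra hc
      have hle : k ≤ u := Finset.min'_le s u (by simp [hs, hc])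
      have := Fin.le_def.mp hle
      omega
    -- y k < w k
    have hyk : (y k).val < (w k).val := by
      have hd := h (k.val + 1) ((w k).val + 1)
      rw [rk_eq_sum, rk_eq_sum, sum_split k, sum_split k] at hd
      have hP : ∑ v ∈ Finset.univ.filter (fun v : Fin n => v.val < k.val),
            (if v.val < k.val + 1 ∧ (w v).val < (w k).val + 1 then 1 else 0)
          = ∑ v ∈ Finset.univ.filter (fun v : Fin n => v.val < k.val),
            (if v.val < k.val + 1 ∧ (y v).val < (w k).val + 1 then 1 else 0) := by
        refine Finset.sum_congr rfl fun v hv => ?_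
        simp only [Finset.mem_filter] at hv
        rw [hpre v hv.2]
      have hT1 : ∑ v ∈ Finset.univ.filter (fun v : Fin n => k.val < v.val),
            (if v.val < k.val + 1 ∧ (w v).val < (w k).val + 1 then 1 else 0) = 0 :=
        Finset.sum_eq_zero fun v hv => by
          simp only [Finset.mem_filter] at hv
          split_ifs <;> omega
      have hT2 : ∑ v ∈ Finset.univ.filter (fun v : Fin n => k.val < v.val),
            (if v.val < k.val + 1 ∧ (y v).val < (w k).val + 1 then 1 else 0) = 0 :=
        Finset.sum_eq_zero fun v hv => by
          simp only [Finset.mem_filter] at hv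
          split_ifs <;> omega
      rw [hP, hT1, hT2] at hd
      have hvne : (y k).val ≠ (w k).val := fun hh => hkmem (Fin.ext hh)
      split_ifs at hd <;> omega
    -- find l
    set m := y.symm (w k) with hm
    have hym : y m = w k := y.apply_symm_apply _
    have hkm : k.val < m.val := by
      rcases lt_trichotomy m.val k.val with hh | hh | hh
      · have hpm := hpre m hh
        rw [hpm] at hym
        have := w.injective hym
        rw [this] at hh
        omega
      · have : m = k := Fin.ext hh
        rw [this] at hym
        rw [hym] at hkmem
        exact absurd rfl hkmem
      · exact hh
    set Ls := Finset.univ.filter (fun u : Fin n =>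
      k.val < u.val ∧ (y k).val < (y u).val ∧ (y u).val ≤ (w k).val) with hLs
    have hmL : m ∈ Ls := by
      simp only [hLs, Finset.mem_filter, Finset.mem_univ, true_and]
      rw [hym]
      exact ⟨hkm, hyk, le_refl _⟩
    set l := Ls.min' ⟨m, hmL⟩ with hl
    have hlmem : k.val < l.val ∧ (y k).val < (y l).val ∧ (y l).val ≤ (w k).val := by
      have hmm := Finset.mem_filter.mp (Finset.min'_mem Ls ⟨m, hmL⟩)
      exact hmm.2
    obtain ⟨hklv, hykl, hylw⟩ := hlmem
    have hkl : k < l := Fin.lt_def.mpr hklv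
    have hmin : ∀ u : Fin n, k.val < u.val → u.val < l.val →
        (y k).val < (y u).val → (w k).val < (y u).val := by
      intro u h1 h2 h3
      by_contra hc
      push_neg at hc
      have hle : l ≤ u := Finset.min'_le Ls u (by
        simp only [hLs, Finset.mem_filter, Finset.mem_univ, true_and]
        exact ⟨h1, h3, hc⟩)
      have := Fin.le_def.mp hle
      omega
    -- the new permutation
    set y' := y * Equiv.swap k l with hy'
    have hswap : ∀ i j, rk y' i j
        + (if k.val < i ∧ i ≤ l.val ∧ (y k).val < j ∧ j ≤ (y l).val then 1 else 0)
        = rk y i j := fun i j => rk_mul_swap y k l hklv hykl i j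
    have hdom' : ∀ i j, rk w i j ≤ rk y' i j := by
      intro i j
      have hid := hswap i j
      by_cases hrect : k.val < i ∧ i ≤ l.val ∧ (y k).val < j ∧ j ≤ (y l).val
      · have := strict_rect y w h k l hklv hpre hyk hylw hmin
          hrect.1 hrect.2.1 hrect.2.2.1 hrect.2.2.2
        rw [if_pos hrect] at hid
        omega
      · rw [if_neg hrect] at hid
        have := h i j
        omega
    have hMlt : (∑ p ∈ Finset.range (n+1) ×ˢ Finset.range (n+1),
          (rk y' p.1 p.2 - rk w p.1 p.2))
        < ∑ p ∈ Finset.range (n+1) ×ˢ Finset.range (n+1), (rk y p.1 p.2 - rk w p.1 p.2) := by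
      apply Finset.sum_lt_sum
      · intro p _
        have hid := hswap p.1 p.2
        have h2 := hdom' p.1 p.2
        have h3 := h p.1 p.2
        split_ifs at hid <;> omega
      · refine ⟨(k.val + 1, (y k).val + 1), ?_, ?_⟩
        · have := k.isLt
          have := (y k).isLt
          simp only [Finset.mem_product, Finset.mem_range]
          omega
        · have hid := hswap (k.val + 1) ((y k).val + 1)
          have hrect : k.val < k.val + 1 ∧ k.val + 1 ≤ l.val ∧
              (y k).val < (y k).val + 1 ∧ (y k).val + 1 ≤ (y l).val := by omega
          rw [if_pos hrect] at hid
          have h2 := hdom' (k.val + 1) ((y k).val + 1)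
          have h3 := h (k.val + 1) ((y k).val + 1)
          simp only
          omega
    have hlen := len_lt_mul_swap y k l hkl (Fin.lt_def.mpr hykl)
    refine Relation.ReflTransGen.head ?_ (IH y' (by omega) hdom')
    exact ⟨Equiv.swap k l, ⟨k, l, ne_of_lt hkl, rfl⟩, rfl, hlen⟩

theorem stmt13 (n : ℕ) (x w : Equiv.Perm (Fin n)) (hxw : bruhatLE x w)
    (hinf : infl w {p : ℕ × ℕ | p.1 ≤ n ∧ p.2 ≤ n ∧ rk x p.1 p.2 = rk w p.1 p.2} =
      {p : ℕ × ℕ | p.1 ≤ n ∧ p.2 ≤ n}) :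
    ∀ y : Equiv.Perm (Fin n),
      (∀ p : ℕ × ℕ, p.1 ≤ n → p.2 ≤ n → rk x p.1 p.2 = rk w p.1 p.2 →
        rk y p.1 p.2 = rk w p.1 p.2) → bruhatLE y w := by
  intro y hy
  set X : Set (ℕ × ℕ) := {p : ℕ × ℕ | p.1 ≤ n ∧ p.2 ≤ n ∧ rk x p.1 p.2 = rk w p.1 p.2} with hX
  have hiter : ∀ k : ℕ, ∀ p ∈ (cOp w X)^[k] X, rk w p.1 p.2 ≤ rk y p.1 p.2 := by
    intro k
    induction k with
    | zero =>
      intro p hp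
      rw [Function.iterate_zero_apply] at hp
      obtain ⟨h1, h2, h3⟩ := hp
      rw [hy p h1 h2 h3]
    | succ k IH =>
      intro p hp
      rw [Function.iterate_succ_apply'] at hp
      rcases hp with hp | hp
      · exact IH p hp
      · obtain ⟨q, hqX, hsc, hd, hcor⟩ := hp
        have hc1 : ((p.1, q.2) : ℕ × ℕ) ∈ (cOp w X)^[k] X := hcor (Set.mem_insert _ _)
        have hc2 : ((q.1, p.2) : ℕ × ℕ) ∈ (cOp w X)^[k] X :=
          hcor (Set.mem_insert_of_mem _ rfl)
        have e1 := IH _ hc1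
        have e2 := IH _ hc2
        simp only at e1 e2
        have eq' : rk y q.1 q.2 = rk w q.1 q.2 := hy q hqX.1 hqX.2.1 hqX.2.2
        have hdn : (rk w p.1 p.2 : ℤ) + rk w q.1 q.2 - rk w p.1 q.2 - rk w q.1 p.2 = 0 := hd
        rcases hsc with ⟨h1, h2⟩ | ⟨h1, h2⟩
        · have hsm := rk_submodular y (le_of_lt h1) (le_of_lt h2)
          omega
        · have hsm := rk_submodular y (le_of_lt h1) (le_of_lt h2)
          omega
  have hdom : ∀ i j, rk w i j ≤ rk y i j := by
    intro i j
    have hp : ((min i n, min j n) : ℕ × ℕ) ∈ infl w X := by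
      rw [hinf]
      exact ⟨min_le_right _ _, min_le_right _ _⟩
    rw [infl, Set.mem_iUnion] at hp
    obtain ⟨k, hk⟩ := hp
    have hle := hiter k _ hk
    simp only at hle
    calc rk w i j = rk w (min i n) (min j n) := rk_min w i j
      _ ≤ rk y (min i n) (min j n) := hle
      _ = rk y i j := (rk_min y i j).symm
  exact dom_bruhat w _ y le_rfl hdom
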